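/- Let q ≥ 2 and k ≥ 1 be integers such that k(q−1) is even. Then for every q-ary sequence x of length k there exists an index z with 0 ≤ z ≤ kq−1 such that x ⊕_q b(z) is balanced, i.e. w(x ⊕_q b(z)) = k(q−1)/2. -/
import Mathlib


/-- Weight of a q-ary sequence: sum of its symbols. -/
def wt {k : ℕ} (x : Fin k → ℕ) : ℕ := ∑ i, x i

/-- Weighting sequence b(s,p): b_i = (s+1) mod q if i-1 < p, else s
    (indices here are 0-based, so the condition is i < p). -/
def bvec (q k s p : ℕ) : Fin k → ℕ := fun i => if (i : ℕ) < p then (s + 1) % q else s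

/-- The z-th weighting sequence b(z) = b(s,p) where z = s·k + p, 0 ≤ p ≤ k-1. -/
def bz (q k z : ℕ) : Fin k → ℕ := bvec q k (z / k) (z % k)

/-- Symbol-wise addition modulo q. -/
def addq (q : ℕ) {k : ℕ} (x y : Fin k → ℕ) : Fin k → ℕ := fun i => (x i + y i) % q

lemma shift_sum (q : ℕ) (hq : 0 < q) (c : ℕ) :
    ∑ s ∈ Finset.range q, (c + s) % q = ∑ s ∈ Finset.range q, s := by
  have hinj : Set.InjOn (fun s => (c + s) % q) (Finset.range q) := by
    intro a ha b hb hab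
    simp only [Finset.coe_range, Set.mem_Iio] at ha hb
    have h1 : a ≡ b [MOD q] := Nat.ModEq.add_left_cancel' c hab
    rwa [Nat.ModEq, Nat.mod_eq_of_lt ha, Nat.mod_eq_of_lt hb] at h1
  have himg : Finset.image (fun s => (c + s) % q) (Finset.range q) = Finset.range q := by
    apply Finset.eq_of_subset_of_card_le
    · intro r hr
      simp only [Finset.mem_image] at hr
      obtain ⟨s, _, rfl⟩ := hr
      exact Finset.mem_range.2 (Nat.mod_lt _ hq)
    · rw [Finset.card_image_of_injOn hinj]
  conv_rhs => rw [← himg]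
  rw [Finset.sum_image (fun a ha b hb h => hinj (Finset.mem_coe.mpr ha) (Finset.mem_coe.mpr hb) h)]

lemma wt_addq_eq (q k : ℕ) (x : Fin k → ℕ) (z : ℕ) :
    wt (addq q x (bz q k z)) =
      ∑ i : Fin k, (x i + z / k + (if (i : ℕ) < z % k then 1 else 0)) % q := by
  unfold wt addq bz bvec
  apply Finset.sum_congr rfl
  intro i _
  by_cases h : (i : ℕ) < z % k <;>
    simp [h, Nat.add_mod_mod, Nat.add_assoc]

lemma F_periodic (q k : ℕ) (hk : 1 ≤ k) (x : Fin k → ℕ) (z : ℕ) :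
    wt (addq q x (bz q k (z + k * q))) = wt (addq q x (bz q k z)) := by
  rw [wt_addq_eq, wt_addq_eq]
  have h1 : (z + k * q) / k = z / k + q := by
    rw [Nat.add_mul_div_left _ _ hk]
  have h2 : (z + k * q) % k = z % k := Nat.add_mul_mod_self_left z k q
  rw [h1, h2]
  apply Finset.sum_congr rfl
  intro i _
  have : x i + (z / k + q) + (if (i : ℕ) < z % k then 1 else 0)
      = (x i + z / k + (if (i : ℕ) < z % k then 1 else 0)) + q := by omega
  rw [this, Nat.add_mod_right]

lemma D_step (q k : ℕ) (hk : 1 ≤ k) (x : Fin k → ℕ) (z : ℕ) (i : Fin k) :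
    x i + (z + 1) / k + (if (i : ℕ) < (z + 1) % k then 1 else 0)
      = x i + z / k + (if (i : ℕ) < z % k then 1 else 0)
        + (if (i : ℕ) = z % k then 1 else 0) := by
  have hdm : z / k * k + z % k = z := Nat.div_add_mod' z k
  have hp : z % k < k := Nat.mod_lt _ hk
  by_cases hcase : z % k + 1 < k
  · have hz1 : z + 1 = (z % k + 1) + (z / k) * k := by omega
    have h1 : (z + 1) / k = z / k := by
      rw [hz1, Nat.add_mul_div_right _ _ hk, Nat.div_eq_of_lt hcase, Nat.zero_add]
    have h2 : (z + 1) % k = z % k + 1 := by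
      rw [hz1, Nat.add_mul_mod_self_right, Nat.mod_eq_of_lt hcase]
    rw [h1, h2]
    have hik := i.isLt
    split_ifs <;> omega
  · have hke : z % k + 1 = k := by omega
    have hz1 : z + 1 = (z / k + 1) * k := by
      rw [Nat.add_mul, one_mul]; omega
    have h1 : (z + 1) / k = z / k + 1 := by
      rw [hz1, Nat.mul_div_cancel _ hk]
    have h2 : (z + 1) % k = 0 := by rw [hz1, Nat.mul_mod_left]
    rw [h1, h2]
    have hik := i.isLt
    split_ifs <;> omega

lemma F_step (q k : ℕ) (hq : 2 ≤ q) (hk : 1 ≤ k) (x : Fin k → ℕ) (z : ℕ) :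
    wt (addq q x (bz q k (z + 1))) = wt (addq q x (bz q k z)) + 1 ∨
    wt (addq q x (bz q k (z + 1))) + (q - 1) = wt (addq q x (bz q k z)) := by
  rw [wt_addq_eq, wt_addq_eq]
  have hp : z % k < k := Nat.mod_lt _ hk
  set i₀ : Fin k := ⟨z % k, hp⟩ with hi₀
  have hmem : i₀ ∈ (Finset.univ : Finset (Fin k)) := Finset.mem_univ _
  rw [← Finset.sum_erase_add (f := fun i =>
    (x i + (z+1) / k + (if (i : ℕ) < (z+1) % k then 1 else 0)) % q) _ hmem,
    ← Finset.sum_erase_add (f := fun i =>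
    (x i + z / k + (if (i : ℕ) < z % k then 1 else 0)) % q) _ hmem]
  have hsame : ∀ i ∈ Finset.univ.erase i₀,
      (x i + (z+1) / k + (if (i : ℕ) < (z+1) % k then 1 else 0)) % q
      = (x i + z / k + (if (i : ℕ) < z % k then 1 else 0)) % q := by
    intro i hi
    have hne : (i : ℕ) ≠ z % k := by
      intro h
      exact (Finset.mem_erase.mp hi).1 (Fin.ext h)
    rw [D_step q k hk x z i, if_neg hne, Nat.add_zero]
  rw [Finset.sum_congr rfl hsame]
  rw [D_step q k hk x z i₀, if_pos rfl]
  set S := ∑ i ∈ Finset.univ.erase i₀, (x i + z / k + (if (i : ℕ) < z % k then 1 else 0)) % q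
  set d := x i₀ + z / k + (if (i₀ : ℕ) < z % k then 1 else 0)
  have hd : d % q < q := Nat.mod_lt _ (by omega)
  have h1q : (1 : ℕ) % q = 1 := Nat.mod_eq_of_lt (by omega)
  by_cases hlast : d % q + 1 < q
  · left
    have he : (d + 1) % q = d % q + 1 := by
      rw [Nat.add_mod, h1q, Nat.mod_eq_of_lt hlast]
    rw [he]; omega
  · right
    have hdq : d % q + 1 = q := by omega
    have he : (d + 1) % q = 0 := by
      rw [Nat.add_mod, h1q, hdq, Nat.mod_self]
    rw [he]; omega

lemma sum_range_mul_eq (k q : ℕ) (f : ℕ → ℕ) :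
    ∑ z ∈ Finset.range (q * k), f z
      = ∑ s ∈ Finset.range q, ∑ p ∈ Finset.range k, f (s * k + p) := by
  induction q with
  | zero => simp
  | succ n ih =>
    rw [Finset.sum_range_succ, ← ih, Nat.succ_mul, Finset.sum_range_add]

lemma total_sum (q k : ℕ) (hq : 2 ≤ q) (hk : 1 ≤ k) (x : Fin k → ℕ) :
    ∑ z ∈ Finset.range (q * k), wt (addq q x (bz q k z))
      = k * (k * ∑ s ∈ Finset.range q, s) := by
  have hqpos : 0 < q := by omega
  calc ∑ z ∈ Finset.range (q * k), wt (addq q x (bz q k z))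
      = ∑ z ∈ Finset.range (q * k), ∑ i : Fin k,
          (x i + z / k + (if (i : ℕ) < z % k then 1 else 0)) % q := by
        exact Finset.sum_congr rfl fun z _ => wt_addq_eq q k x z
    _ = ∑ i : Fin k, ∑ z ∈ Finset.range (q * k),
          (x i + z / k + (if (i : ℕ) < z % k then 1 else 0)) % q := Finset.sum_comm
    _ = ∑ i : Fin k, (k * ∑ s ∈ Finset.range q, s) := by
        apply Finset.sum_congr rfl
        intro i _
        rw [sum_range_mul_eq k q]
        have hterm : ∀ s ∈ Finset.range q, ∀ p ∈ Finset.range k,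
            (x i + (s * k + p) / k + (if (i : ℕ) < (s * k + p) % k then 1 else 0)) % q
            = ((x i + (if (i : ℕ) < p then 1 else 0)) + s) % q := by
          intro s _ p hp
          have hpk : p < k := Finset.mem_range.mp hp
          have h1 : (s * k + p) / k = s := by
            rw [Nat.add_comm, Nat.add_mul_div_right _ _ hk, Nat.div_eq_of_lt hpk, Nat.zero_add]
          have h2 : (s * k + p) % k = p := by
            rw [Nat.add_comm, Nat.add_mul_mod_self_right, Nat.mod_eq_of_lt hpk]
          rw [h1, h2]
          congr 1
          omega
        rw [Finset.sum_congr rfl (fun s hs => Finset.sum_congr rfl (hterm s hs))]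
        rw [Finset.sum_comm]
        calc ∑ p ∈ Finset.range k, ∑ s ∈ Finset.range q,
              ((x i + (if (i : ℕ) < p then 1 else 0)) + s) % q
            = ∑ p ∈ Finset.range k, ∑ s ∈ Finset.range q, s := by
              exact Finset.sum_congr rfl fun p _ => shift_sum q hqpos _
          _ = k * ∑ s ∈ Finset.range q, s := by
              rw [Finset.sum_const, Finset.card_range, smul_eq_mul]
    _ = k * (k * ∑ s ∈ Finset.range q, s) := by
        rw [Finset.sum_const, Finset.card_univ, Fintype.card_fin, smul_eq_mul]

/-- if k(q-1) is even, every q-ary sequence x of length k can be balanced: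
    there is a z, 0 ≤ z ≤ kq-1, with w(x ⊕_q b(z)) = k(q-1)/2. -/
theorem stmt8 (q k : ℕ) (hq : 2 ≤ q) (hk : 1 ≤ k) (heven : Even (k * (q - 1)))
    (x : Fin k → ℕ) (hx : ∀ i, x i < q) :
    ∃ z : ℕ, z ≤ k * q - 1 ∧ 2 * wt (addq q x (bz q k z)) = k * (q - 1) := by
  obtain ⟨M, hM⟩ := heven
  set F : ℕ → ℕ := fun z => wt (addq q x (bz q k z)) with hF
  have hkq : 0 < q * k := Nat.mul_pos (by omega) hk
  by_contra hcon
  push_neg at hcon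
  have hne : ∀ z < q * k, F z ≠ M := by
    intro z hz hzM
    have h1 : z ≤ k * q - 1 := by rw [mul_comm k q]; omega
    have h2 := hcon z h1
    simp only [hF] at hzM
    apply h2
    omega
  have hper : Function.Periodic F (k * q) := fun z => F_periodic q k hk x z
  have hneall : ∀ z, F z ≠ M := by
    intro z
    rw [← hper.map_mod_nat]
    exact hne _ (by rw [mul_comm q k]; exact Nat.mod_lt _ (Nat.mul_pos hk (by omega)))
  -- the total sum
  have hsum : ∑ z ∈ Finset.range (q * k), F z = q * k * M := by
    have h1 := total_sum q k hq hk x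
    have h2 : (∑ s ∈ Finset.range q, s) * 2 = q * (q - 1) := Finset.sum_range_id_mul_two q
    have : (∑ z ∈ Finset.range (q * k), F z) * 2 = (q * k * M) * 2 := by
      rw [hF, h1]
      calc k * (k * ∑ s ∈ Finset.range q, s) * 2
          = k * (k * ((∑ s ∈ Finset.range q, s) * 2)) := by ring
        _ = k * (k * (q * (q - 1))) := by rw [h2]
        _ = (q * k) * (k * (q - 1)) := by ring
        _ = (q * k) * (M + M) := by rw [hM]
        _ = (q * k * M) * 2 := by ring
    omega
  -- there is a point below M and a point above M
  have hlow : ∃ z1 ∈ Finset.range (q * k), F z1 < M := by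
    by_contra hc
    push_neg at hc
    have hle : ∑ z ∈ Finset.range (q * k), M ≤ ∑ z ∈ Finset.range (q * k), F z :=
      Finset.sum_le_sum fun z hz => hc z hz
    rw [Finset.sum_const, Finset.card_range, smul_eq_mul, hsum] at hle
    -- all ≥ M and none = M means all ≥ M+1
    have hle2 : ∑ z ∈ Finset.range (q * k), (M + 1) ≤ ∑ z ∈ Finset.range (q * k), F z := by
      apply Finset.sum_le_sum
      intro z hz
      have := hc z hz
      have := hne z (Finset.mem_range.mp hz)
      omega
    rw [Finset.sum_const, Finset.card_range, smul_eq_mul, hsum, Nat.mul_add, Nat.mul_one] at hle2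
    omega
  have hhigh : ∃ z2 ∈ Finset.range (q * k), M < F z2 := by
    by_contra hc
    push_neg at hc
    have hle2 : ∑ z ∈ Finset.range (q * k), (F z + 1) ≤ ∑ z ∈ Finset.range (q * k), M := by
      apply Finset.sum_le_sum
      intro z hz
      have := hc z hz
      have := hne z (Finset.mem_range.mp hz)
      omega
    rw [Finset.sum_add_distrib, Finset.sum_const, Finset.sum_const, Finset.card_range,
      smul_eq_mul, smul_eq_mul, hsum, Nat.mul_one] at hle2
    omega
  obtain ⟨z1, hz1mem, hz1⟩ := hlow
  obtain ⟨z2, _, hz2⟩ := hhigh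
  have hz1lt : z1 < q * k := Finset.mem_range.mp hz1mem
  -- crossing argument
  have hQ : ∃ n, z1 < n ∧ M < F n := by
    by_cases hc : z1 < z2
    · exact ⟨z2, hc, hz2⟩
    · refine ⟨z2 + k * q, by rw [mul_comm q k] at hz1lt; omega, ?_⟩
      rw [hper z2]
      exact hz2
  set z0 := Nat.find hQ with hz0
  obtain ⟨hz0gt, hz0M⟩ := Nat.find_spec hQ
  have hz0pos : 1 ≤ z0 := by omega
  set w := z0 - 1 with hw
  have hwz : w + 1 = z0 := by omega
  have hwle : F w ≤ M := by
    rcases Nat.lt_or_ge z1 w with h | h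
    · have hmin := Nat.find_min hQ (m := w) (by omega)
      push_neg at hmin
      exact hmin h
    · have : w = z1 := by omega
      rw [this]; omega
  have hM0 : M < F z0 := hz0M
  rcases F_step q k hq hk x w with hstep | hstep
  · rw [hwz] at hstep
    have hstep' : F z0 = F w + 1 := hstep
    have : F w = M := by omega
    exact hneall w this
  · rw [hwz] at hstep
    have hstep' : F z0 + (q - 1) = F w := hstep
    omega
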